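/- Let T > 0, C > 0 and α₀ > 0, and define f(x) := x^{3/2} + x² for x ≥ 0 and F(x) := 1/√x − log(1 + 1/√x) for x > 0. Suppose e, d : [0, T) → [0, ∞) are continuous, e is continuously differentiable, e′(t) + d(t) ≤ C·f(e(t)) for all t ∈ (0, T), and e(0) ≤ α₀. Then for every t with 0 ≤ t < min(T, 2F(α₀)/C) and every m > 0 satisfying F(m) = F(α₀) − (C/2)·t, one has e(t) ≤ m and ∫₀ᵗ d(s) ds ≤ α₀ + C·t·f(m). -/

import Mathlib

/-- `f(x) = x^{3/2} + x²`. -/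
noncomputable def fBihari (x : ℝ) : ℝ := x ^ ((3 : ℝ) / 2) + x ^ 2

/-- `F(x) = 1/√x − log(1 + 1/√x)`. -/
noncomputable def FBihari (x : ℝ) : ℝ :=
  1 / Real.sqrt x - Real.log (1 + 1 / Real.sqrt x)

open Real Set Topology Filter

lemma fBihari_pos {x : ℝ} (hx : 0 < x) : 0 < fBihari x := by
  unfold fBihari; positivity

lemma fBihari_mono {x y : ℝ} (hx : 0 ≤ x) (hxy : x ≤ y) : fBihari x ≤ fBihari y := by
  unfold fBihari; gcongr

lemma fBihari_eq {x : ℝ} (hx : 0 < x) : fBihari x = x * Real.sqrt x + x ^ 2 := by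
  unfold fBihari
  rw [show (3:ℝ)/2 = 1 + 1/2 by norm_num, Real.rpow_add hx, Real.rpow_one,
    ← Real.sqrt_eq_rpow]

lemma FBihari_hasDerivAt {x : ℝ} (hx : 0 < x) :
    HasDerivAt FBihari (-(2 * fBihari x)⁻¹) x := by
  have hs : 0 < Real.sqrt x := Real.sqrt_pos.mpr hx
  have h1 : HasDerivAt (fun y => Real.sqrt y) (1/(2*Real.sqrt x)) x :=
    Real.hasDerivAt_sqrt hx.ne'
  have h2 : HasDerivAt (fun y => 1 / Real.sqrt y)
      (-(1/(2*Real.sqrt x)) / (Real.sqrt x)^2) x := by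
    simpa only [one_div, Pi.inv_def] using h1.inv hs.ne'
  have h3 : 1 + 1 / Real.sqrt x ≠ 0 := by positivity
  have h5 : HasDerivAt (fun y => Real.log (1 + 1 / Real.sqrt y))
      ((-(1/(2*Real.sqrt x)) / (Real.sqrt x)^2) / (1 + 1 / Real.sqrt x)) x :=
    (h2.const_add 1).log h3
  have h6 := h2.sub h5
  have gen : ∀ s : ℝ, 0 < s → -(1/(2*s))/s^2 - (-(1/(2*s))/s^2)/(1+1/s)
      = -(2*(s^2*s + (s^2)^2))⁻¹ := by
    intro s hs0
    have h1 : 1 + 1/s ≠ 0 := by positivity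
    field_simp
    ring
  have key : -(1/(2*Real.sqrt x)) / (Real.sqrt x)^2
      - (-(1/(2*Real.sqrt x)) / (Real.sqrt x)^2) / (1 + 1 / Real.sqrt x)
      = -(2 * fBihari x)⁻¹ := by
    have hsq : Real.sqrt x ^ 2 = x := Real.sq_sqrt hx.le
    rw [fBihari_eq hx]
    have := gen _ hs
    rw [hsq] at this ⊢; exact this
  rw [← key]
  exact h6

lemma FBihari_contOn : ContinuousOn FBihari (Set.Ioi 0) := fun x hx =>
  ((FBihari_hasDerivAt hx).continuousAt).continuousWithinAt

lemma FBihari_strictAnti : StrictAntiOn FBihari (Set.Ioi 0) := by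
  apply strictAntiOn_of_deriv_neg (convex_Ioi 0) FBihari_contOn
  intro x hx
  rw [interior_Ioi] at hx
  rw [(FBihari_hasDerivAt hx).deriv]
  have := fBihari_pos hx
  have h : (0:ℝ) < (2 * fBihari x)⁻¹ := by positivity
  linarith

/-- Local-in-time Bihari argument: if `e′(t) + d(t) ≤ C·f(e(t))` on `(0, T)` with
`e(0) ≤ α₀`, then for `0 ≤ t < min(T, 2F(α₀)/C)` and any `m > 0` with
`F(m) = F(α₀) − (C/2)t` one has `e(t) ≤ m` and `∫₀ᵗ d ≤ α₀ + C·t·f(m)`. -/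
theorem bihari_local (T C α₀ : ℝ) (hT : 0 < T) (hC : 0 < C) (hα₀ : 0 < α₀)
    (e d e' : ℝ → ℝ)
    (he_cont : ContinuousOn e (Set.Ico 0 T))
    (hd_cont : ContinuousOn d (Set.Ico 0 T))
    (he_nonneg : ∀ t ∈ Set.Ico (0 : ℝ) T, 0 ≤ e t)
    (hd_nonneg : ∀ t ∈ Set.Ico (0 : ℝ) T, 0 ≤ d t)
    (he_deriv : ∀ t ∈ Set.Ico (0 : ℝ) T, HasDerivWithinAt e (e' t) (Set.Ico 0 T) t)
    (he'_cont : ContinuousOn e' (Set.Ico 0 T))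
    (hode : ∀ t ∈ Set.Ioo (0 : ℝ) T, e' t + d t ≤ C * fBihari (e t))
    (he0 : e 0 ≤ α₀) :
    ∀ t, 0 ≤ t → t < min T (2 * FBihari α₀ / C) →
      ∀ m, 0 < m → FBihari m = FBihari α₀ - C / 2 * t →
        e t ≤ m ∧ (∫ s in (0 : ℝ)..t, d s) ≤ α₀ + C * t * fBihari m := by
  intro t ht htlt m hm hFm
  have htT : t < T := lt_of_lt_of_le htlt (min_le_left _ _)
  have hCt : 0 ≤ C / 2 * t := by positivity
  have hmα : α₀ ≤ m := by
    by_contra h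
    push_neg at h
    have h2 : FBihari α₀ < FBihari m :=
      FBihari_strictAnti (Set.mem_Ioi.mpr hm) (Set.mem_Ioi.mpr hα₀) h
    linarith [hFm]
  -- main pointwise claim
  have key : ∀ s ∈ Set.Icc (0:ℝ) t, e s ≤ m := by
    intro s hs
    by_contra hes
    push_neg at hes
    have hsub : Set.Icc (0:ℝ) s ⊆ Set.Ico 0 T :=
      fun u hu => ⟨hu.1, lt_of_le_of_lt (hu.2.trans hs.2) htT⟩
    have hecont : ContinuousOn e (Set.Icc 0 s) := he_cont.mono hsub
    set S := Set.Icc (0:ℝ) s ∩ e ⁻¹' Set.Iic α₀ with hSdef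
    have hS0 : (0:ℝ) ∈ S := ⟨⟨le_refl 0, hs.1⟩, he0⟩
    have hSne : S.Nonempty := ⟨0, hS0⟩
    have hSclosed : IsClosed S :=
      hecont.preimage_isClosed_of_isClosed isClosed_Icc isClosed_Iic
    have hSbdd : BddAbove S := ⟨s, fun u hu => hu.1.2⟩
    set s₀ := sSup S with hs₀def
    have hs₀S : s₀ ∈ S := hSclosed.csSup_mem hSne hSbdd
    have hs₀0 : 0 ≤ s₀ := hs₀S.1.1
    have hs₀s : s₀ ≤ s := hs₀S.1.2
    have hs₀lt : s₀ < s := by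
      rcases lt_or_eq_of_le hs₀s with h|h
      · exact h
      · exfalso
        rw [h] at hs₀S
        have : e s ≤ α₀ := hs₀S.2
        linarith
    have hgt : ∀ u ∈ Set.Ioc s₀ s, α₀ < e u := by
      intro u hu
      by_contra h
      push_neg at h
      have hu' : u ∈ S := ⟨⟨hs₀0.trans hu.1.le, hu.2⟩, h⟩
      exact absurd (le_csSup hSbdd hu') (not_le.mpr hu.1)
    have hge : α₀ ≤ e s₀ := by
      have hcw : ContinuousWithinAt e (Set.Ioc s₀ s) s₀ :=
        (hecont.continuousWithinAt ⟨hs₀0, hs₀s⟩).mono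
          (fun u hu => ⟨hs₀0.trans hu.1.le, hu.2⟩)
      have hne : (𝓝[Set.Ioc s₀ s] s₀).NeBot := by
        rw [← mem_closure_iff_nhdsWithin_neBot, closure_Ioc hs₀lt.ne]
        exact ⟨le_refl s₀, hs₀s⟩
      exact ge_of_tendsto hcw (Filter.eventually_of_mem self_mem_nhdsWithin
        (fun u hu => (hgt u hu).le))
    have hes0 : e s₀ = α₀ := le_antisymm hs₀S.2 hge
    have hepos : ∀ u ∈ Set.Icc s₀ s, 0 < e u := by
      intro u hu
      rcases eq_or_lt_of_le hu.1 with h|h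
      · rw [← h, hes0]; exact hα₀
      · exact hα₀.trans (hgt u ⟨h, hu.2⟩)
    have huT : ∀ u ∈ Set.Ioo s₀ s, u ∈ Set.Ioo 0 T := by
      intro u hu
      exact ⟨lt_of_le_of_lt hs₀0 hu.1, (hu.2.trans_le hs.2).trans htT⟩
    set ψ := fun u => FBihari (e u) + C/2 * u with hψ
    have hder : ∀ u ∈ Set.Ioo s₀ s,
        HasDerivAt ψ (-(2 * fBihari (e u))⁻¹ * e' u + C/2) u := by
      intro u hu
      have huT' := huT u hu
      have heu : HasDerivAt e (e' u) u := by
        have h := he_deriv u ⟨huT'.1.le, huT'.2⟩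
        exact h.hasDerivAt (Filter.mem_of_superset (isOpen_Ioo.mem_nhds huT')
          Set.Ioo_subset_Ico_self)
      have h1 := (FBihari_hasDerivAt (hepos u (Set.Ioo_subset_Icc_self hu))).comp u heu
      have h2 : HasDerivAt (fun u : ℝ => C/2 * u) (C/2) u := by
        simpa using (hasDerivAt_id u).const_mul (C/2)
      exact h1.add h2
    have hψcont : ContinuousOn ψ (Set.Icc s₀ s) := by
      apply ContinuousOn.add
      · exact FBihari_contOn.comp
          (hecont.mono (Set.Icc_subset_Icc hs₀0 (le_refl s)))
          (fun u hu => Set.mem_Ioi.mpr (hepos u hu))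
      · exact (continuous_const.mul continuous_id).continuousOn
    have hmono : MonotoneOn ψ (Set.Icc s₀ s) := by
      apply monotoneOn_of_deriv_nonneg (convex_Icc s₀ s) hψcont
      · intro u hu
        rw [interior_Icc] at hu
        exact (hder u hu).differentiableAt.differentiableWithinAt
      · intro u hu
        rw [interior_Icc] at hu
        rw [(hder u hu).deriv]
        have hF : 0 < fBihari (e u) := fBihari_pos (hepos u (Set.Ioo_subset_Icc_self hu))
        have huT' := huT u hu
        have hd0 : 0 ≤ d u := hd_nonneg u ⟨huT'.1.le, huT'.2⟩
        have hode' : e' u ≤ C * fBihari (e u) := by linarith [hode u huT']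
        have h1 : (2 * fBihari (e u))⁻¹ * e' u
            ≤ (2 * fBihari (e u))⁻¹ * (C * fBihari (e u)) :=
          mul_le_mul_of_nonneg_left hode' (by positivity)
        have h2 : (2 * fBihari (e u))⁻¹ * (C * fBihari (e u)) = C/2 := by
          field_simp
        linarith
    have hψle : ψ s₀ ≤ ψ s :=
      hmono (Set.left_mem_Icc.mpr hs₀lt.le) (Set.right_mem_Icc.mpr hs₀lt.le) hs₀lt.le
    have hFes : FBihari m ≤ FBihari (e s) := by
      have h1 : FBihari (e s₀) + C/2 * s₀ ≤ FBihari (e s) + C/2 * s := hψle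
      rw [hes0] at h1
      rw [hFm]
      have h2 : 0 ≤ C/2 * s₀ := by positivity
      have h3 : C/2 * s ≤ C/2 * t := by
        apply mul_le_mul_of_nonneg_left hs.2 (by positivity)
      linarith
    have hlt : FBihari (e s) < FBihari m :=
      FBihari_strictAnti (Set.mem_Ioi.mpr hm) (Set.mem_Ioi.mpr (hm.trans hes)) hes
    linarith
  refine ⟨key t ⟨ht, le_refl t⟩, ?_⟩
  -- integral bound
  have hsub : Set.Icc (0:ℝ) t ⊆ Set.Ico 0 T := fun u hu => ⟨hu.1, lt_of_le_of_lt hu.2 htT⟩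
  have huIcc : Set.uIcc (0:ℝ) t = Set.Icc 0 t := Set.uIcc_of_le ht
  have het : ContinuousOn e (Set.Icc 0 t) := he_cont.mono hsub
  have hfBe : ContinuousOn (fun s => fBihari (e s)) (Set.Icc 0 t) := by
    have h1 : ContinuousOn (fun s => (e s) ^ ((3:ℝ)/2)) (Set.Icc 0 t) := fun u hu =>
      (Real.continuousAt_rpow_const (e u) ((3:ℝ)/2)
        (Or.inr (by norm_num))).comp_continuousWithinAt (het.continuousWithinAt hu)
    simpa [fBihari, Pi.add_def, Pi.pow_def] using h1.add (het.pow 2)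
  have hd_int : IntervalIntegrable d MeasureTheory.volume 0 t := by
    apply ContinuousOn.intervalIntegrable; rw [huIcc]; exact hd_cont.mono hsub
  have he'_int : IntervalIntegrable e' MeasureTheory.volume 0 t := by
    apply ContinuousOn.intervalIntegrable; rw [huIcc]; exact he'_cont.mono hsub
  have hfe_int : IntervalIntegrable (fun s => C * fBihari (e s)) MeasureTheory.volume 0 t := by
    apply ContinuousOn.intervalIntegrable; rw [huIcc]
    exact continuousOn_const.mul hfBe
  have hg_int : IntervalIntegrable (fun s => C * fBihari (e s) - e' s)
      MeasureTheory.volume 0 t := hfe_int.sub he'_int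
  have step1 : (∫ s in (0:ℝ)..t, d s) ≤ ∫ s in (0:ℝ)..t, (C * fBihari (e s) - e' s) := by
    rw [intervalIntegral.integral_of_le ht, intervalIntegral.integral_of_le ht]
    apply MeasureTheory.setIntegral_mono_on
      ((intervalIntegrable_iff_integrableOn_Ioc_of_le ht).mp hd_int)
      ((intervalIntegrable_iff_integrableOn_Ioc_of_le ht).mp hg_int)
      measurableSet_Ioc
    intro u hu
    have huT' : u ∈ Set.Ioo 0 T := ⟨hu.1, hu.2.trans_lt htT⟩
    linarith [hode u huT']
  have hFTC : (∫ s in (0:ℝ)..t, e' s) = e t - e 0 := by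
    apply intervalIntegral.integral_eq_sub_of_hasDeriv_right_of_le ht het _ he'_int
    intro u hu
    have huT' : u ∈ Set.Ioo 0 T := ⟨hu.1, hu.2.trans htT⟩
    have heu : HasDerivAt e (e' u) u := by
      have h := he_deriv u ⟨huT'.1.le, huT'.2⟩
      exact h.hasDerivAt (Filter.mem_of_superset (isOpen_Ioo.mem_nhds huT')
        Set.Ioo_subset_Ico_self)
    exact heu.hasDerivWithinAt
  have step3 : (∫ s in (0:ℝ)..t, C * fBihari (e s))
      ≤ ∫ _ in (0:ℝ)..t, C * fBihari m := by
    rw [intervalIntegral.integral_of_le ht, intervalIntegral.integral_of_le ht]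
    apply MeasureTheory.setIntegral_mono_on
      ((intervalIntegrable_iff_integrableOn_Ioc_of_le ht).mp hfe_int)
      ((intervalIntegrable_iff_integrableOn_Ioc_of_le ht).mp intervalIntegrable_const)
      measurableSet_Ioc
    intro u hu
    have h0u : 0 ≤ e u := he_nonneg u ⟨hu.1.le, hu.2.trans_lt htT⟩
    exact mul_le_mul_of_nonneg_left (fBihari_mono h0u (key u ⟨hu.1.le, hu.2⟩)) hC.le
  have hconst : (∫ _ in (0:ℝ)..t, C * fBihari m) = t * (C * fBihari m) := by
    rw [intervalIntegral.integral_const]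
    simp
  have hsplit : (∫ s in (0:ℝ)..t, (C * fBihari (e s) - e' s))
      = (∫ s in (0:ℝ)..t, C * fBihari (e s)) - ∫ s in (0:ℝ)..t, e' s :=
    intervalIntegral.integral_sub hfe_int he'_int
  have het0 : 0 ≤ e t := he_nonneg t ⟨ht, htT⟩
  rw [hsplit, hFTC] at step1
  have : (∫ s in (0:ℝ)..t, d s) ≤ t * (C * fBihari m) - e t + e 0 := by
    rw [hconst] at step3; linarith
  linarith [this]
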